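/- Let S be a profinite semigroup. If S is a KR-cover, then S is equidivisible. -/

import Mathlib

set_option autoImplicit false

/-! ### General notions: topological semigroups, pseudovarieties, pro-V semigroups -/

/-- Continuity of a map into a type regarded with the discrete topology. -/
def ContinuousDisc {S : Type} [TopologicalSpace S] {T : Type} (f : S → T) : Prop :=
  @Continuous S T _ ⊥ f

/-- A pseudovariety of semigroups: a class of finite semigroups closed under
homomorphic images, subsemigroups and finite direct products. -/
structure Pseudovariety : Type 1 where
  Mem : ∀ (S : Type) [Semigroup S], Prop
  finite : ∀ (S : Type) [Semigroup S], Mem S → Finite S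
  closed_hom : ∀ (S T : Type) [Semigroup S] [Semigroup T] (f : S →ₙ* T),
    Mem S → Function.Surjective f → Mem T
  closed_sub : ∀ (S T : Type) [Semigroup S] [Semigroup T] (f : T →ₙ* S),
    Mem S → Function.Injective f → Mem T
  closed_prod : ∀ (ι : Type) [Finite ι] (S : ι → Type) [∀ i, Semigroup (S i)],
    (∀ i, Mem (S i)) → Mem (∀ i, S i)

/-- A bundled member of a pseudovariety `V` (a finite semigroup belonging to `V`),
always regarded as carrying the discrete topology. -/
structure SgrIn (V : Pseudovariety) : Type 1 where
  carrier : Type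
  [str : Semigroup carrier]
  mem : V.Mem carrier

attribute [instance] SgrIn.str

/-- A (bundled) topological semigroup. -/
structure TopSgr : Type 1 where
  carrier : Type
  [str : Semigroup carrier]
  [top : TopologicalSpace carrier]

attribute [instance] TopSgr.str TopSgr.top

/-- A finite semigroup regarded as a topological semigroup with the discrete topology. -/
def discTopSgr (S : Type) [Semigroup S] : TopSgr :=
  @TopSgr.mk S _ ⊥

/-- A pro-V semigroup: a compact Hausdorff topological semigroup that is residually `V`. -/
def IsProV (V : Pseudovariety) (S : TopSgr) : Prop :=
  CompactSpace S.carrier ∧ T2Space S.carrier ∧ ContinuousMul S.carrier ∧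
    ∀ x y : S.carrier, x ≠ y → ∃ (F : SgrIn V) (f : S.carrier →ₙ* F.carrier),
      ContinuousDisc ⇑f ∧ f x ≠ f y

/-- A profinite semigroup: a compact Hausdorff totally disconnected topological semigroup. -/
def IsProfiniteSgr (S : TopSgr) : Prop :=
  CompactSpace S.carrier ∧ T2Space S.carrier ∧ TotallyDisconnectedSpace S.carrier ∧
    ContinuousMul S.carrier

/-- `C`, together with the continuous homomorphisms `φ i`, is a `V`-coproduct of the
family `S` of pro-`V` semigroups. -/
structure IsCoproduct (V : Pseudovariety) {I : Type} (S : I → TopSgr)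
    (C : TopSgr) (φ : ∀ i, (S i).carrier →ₙ* C.carrier) : Prop where
  proV : IsProV V C
  cont : ∀ i, Continuous ⇑(φ i)
  universal : ∀ (T : TopSgr), IsProV V T →
    ∀ ψ : ∀ i, (S i).carrier →ₙ* T.carrier, (∀ i, Continuous ⇑(ψ i)) →
      ∃! Ψ : C.carrier →ₙ* T.carrier, Continuous ⇑Ψ ∧ ∀ i, Ψ.comp (φ i) = ψ i

/-- `P`, together with the homomorphisms `e i`, is a free product (coproduct in the
category of semigroups) of the family `S`. -/
structure IsFreeProduct {I : Type} (S : I → Type) [∀ i, Semigroup (S i)]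
    (P : Type) [Semigroup P] (e : ∀ i, S i →ₙ* P) : Prop where
  universal : ∀ (T : Type) [Semigroup T] (f : ∀ i, S i →ₙ* T),
    ∃! F : P →ₙ* T, ∀ i, F.comp (e i) = f i

/-! ### Particular pseudovarieties and related notions -/

/-- `V` contains the pseudovariety `Sl` of finite semilattices. -/
def ContainsSl (V : Pseudovariety) : Prop :=
  ∀ (S : Type) [Semigroup S] [Finite S],
    (∀ x y : S, x * y = y * x) → (∀ x : S, x * x = x) → V.Mem S

/-- Green's `J`-preorder: `s ≤_J t`, i.e. `s ∈ S^I t S^I`. -/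
def JBelow {S : Type} [Semigroup S] (s t : S) : Prop :=
  ∃ x y : WithOne S, x * (t : WithOne S) * y = (s : WithOne S)

/-- `V` contains the pseudovariety `J` of finite `J`-trivial semigroups. -/
def ContainsJ (V : Pseudovariety) : Prop :=
  ∀ (S : Type) [Semigroup S] [Finite S],
    (∀ s t : S, JBelow s t → JBelow t s → s = t) → V.Mem S

/-- The preimage of an idempotent under a semigroup homomorphism, as a subsemigroup. -/
def fiberSub {S T : Type} [Semigroup S] [Semigroup T] (ψ : S →ₙ* T) (e : T)
    (he : e * e = e) : Subsemigroup S where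
  carrier := ⇑ψ ⁻¹' {e}
  mul_mem' := by
    intro a b ha hb
    simp only [Set.mem_preimage, Set.mem_singleton_iff] at *
    rw [map_mul, ha, hb, he]

/-- The set of products of `n+1` elements of a semigroup (so `nthProds S 0 = S`). -/
def nthProds (S : Type) [Semigroup S] : ℕ → Set S
  | 0 => Set.univ
  | n + 1 => {x | ∃ a y, y ∈ nthProds S n ∧ x = a * y}

/-- A nilpotent semigroup: it has a zero `z` and some power of the semigroup is `{z}`. -/
def IsNilpotentSgr (S : Type) [Semigroup S] : Prop :=
  ∃ z : S, (∀ x : S, z * x = z ∧ x * z = z) ∧ ∃ n : ℕ, nthProds S n ⊆ {z}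

/-- A generator of the Mal'cev product `N ⓜ V`: a finite semigroup admitting a surjective
homomorphism onto a member of `V` all of whose idempotent fibers are nilpotent. -/
def NMalcevGen (V : Pseudovariety) (S : Type) [Semigroup S] : Prop :=
  Finite S ∧ ∃ (T : SgrIn V) (ψ : S →ₙ* T.carrier), Function.Surjective ψ ∧
    ∀ (e : T.carrier) (he : e * e = e), IsNilpotentSgr (fiberSub ψ e he)

/-- The equality `N ⓜ V = V`: `V` coincides with the smallest pseudovariety containing
all finite semigroups admitting an `N`-morphism onto some member of `V`. -/
def NMalcevFixed (V : Pseudovariety) : Prop :=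
  ∀ (S : Type) [Semigroup S] [Finite S],
    V.Mem S ↔ ∀ U : Pseudovariety,
      (∀ (S' : Type) [Semigroup S'], NMalcevGen V S' → U.Mem S') → U.Mem S

/-- A completely simple semigroup: simple with a primitive idempotent. -/
def IsCompletelySimple (S : Type) [Semigroup S] : Prop :=
  (∀ J : Set S, J.Nonempty → (∀ s x : S, x ∈ J → s * x ∈ J ∧ x * s ∈ J) → J = Set.univ) ∧
  ∃ e : S, e * e = e ∧ ∀ f : S, f * f = f → e * f = f → f * e = f → f = e

/-- An equidivisible semigroup. -/
def Equidivisible (S : Type) [Semigroup S] : Prop :=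
  ∀ u v x y : S, u * v = x * y →
    ∃ t : WithOne S,
      ((x : WithOne S) = (u : WithOne S) * t ∧ t * (y : WithOne S) = (v : WithOne S)) ∨
      ((x : WithOne S) * t = (u : WithOne S) ∧ (y : WithOne S) = t * (v : WithOne S))

/-! ### The two-sided Karnofsky–Rhodes expansion -/

/-- Vertices of the two-sided Cayley graph of `T`: pairs of elements of `T^I`. -/
abbrev KRVtx (T : Type) : Type := WithOne T × WithOne T

/-- Edges of the two-sided Cayley graph: (source, label, target). -/
abbrev KREdge (A T : Type) : Type := KRVtx T × A × KRVtx T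

/-- The image in `T^I` of a letter. -/
def letterImg {A T : Type} [Semigroup T] (ψ : FreeSemigroup A →ₙ* T) (a : A) : WithOne T :=
  (ψ (FreeSemigroup.of a) : WithOne T)

/-- The image in `T^I` of a (possibly empty) word. -/
def wordImg {A T : Type} [Semigroup T] (ψ : FreeSemigroup A →ₙ* T) (w : List A) : WithOne T :=
  (w.map (letterImg ψ)).prod

/-- `e` is an edge of the two-sided Cayley graph `Γ_ψ`. -/
def IsKREdge {A T : Type} [Semigroup T] (ψ : FreeSemigroup A →ₙ* T) (e : KREdge A T) : Prop :=
  e.1.1 * letterImg ψ e.2.1 = e.2.2.1 ∧ e.1.2 = letterImg ψ e.2.1 * e.2.2.2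

/-- One step along an edge of `Γ_ψ` (used to define directed paths). -/
def KRStep {A T : Type} [Semigroup T] (ψ : FreeSemigroup A →ₙ* T) (v w : KRVtx T) : Prop :=
  ∃ a : A, v.1 * letterImg ψ a = w.1 ∧ v.2 = letterImg ψ a * w.2

/-- A transition edge of `Γ_ψ`: an edge from whose target there is no directed path
back to its source. -/
def IsTransEdge {A T : Type} [Semigroup T] (ψ : FreeSemigroup A →ₙ* T) (e : KREdge A T) : Prop :=
  IsKREdge ψ e ∧ ¬ Relation.ReflTransGen (KRStep ψ) e.2.2 e.1

/-- The list of letters of an element of the free semigroup. -/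
def letters {A : Type} (u : FreeSemigroup A) : List A := u.head :: u.tail

/-- The set of edges of the path `p_u` of `Γ_ψ` from `(I, ψ u)` to `(ψ u, I)` labeled by `u`. -/
def pathEdges {A T : Type} [Semigroup T] (ψ : FreeSemigroup A →ₙ* T) (u : FreeSemigroup A) :
    Set (KREdge A T) :=
  {e | ∃ (w₁ w₂ : List A) (a : A), letters u = w₁ ++ a :: w₂ ∧
    e = ((wordImg ψ w₁, wordImg ψ (a :: w₂)), a, (wordImg ψ (w₁ ++ [a]), wordImg ψ w₂))}

/-- The set `T(p_u)` of transition edges of `Γ_ψ` occurring in the path `p_u`. -/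
def transEdges {A T : Type} [Semigroup T] (ψ : FreeSemigroup A →ₙ* T) (u : FreeSemigroup A) :
    Set (KREdge A T) :=
  {e ∈ pathEdges ψ u | IsTransEdge ψ e}

/-- A realization of the two-sided Karnofsky–Rhodes expansion of `ψ : A⁺ → T`:
a semigroup `K = T_ψ^KR` together with the projection `ψ^KR : A⁺ → K`, which is onto and
identifies `u` and `v` exactly when `ψ u = ψ v` and `T(p_u) = T(p_v)`, and the canonical
homomorphism `π : T_ψ^KR → T` with `π ∘ ψ^KR = ψ`. -/
structure KRExp {A T : Type} [Semigroup T] (ψ : FreeSemigroup A →ₙ* T) : Type 1 where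
  K : Type
  [strK : Semigroup K]
  [finK : Finite K]
  ψKR : FreeSemigroup A →ₙ* K
  π : K →ₙ* T
  surj : Function.Surjective ⇑ψKR
  ker : ∀ u v : FreeSemigroup A, ψKR u = ψKR v ↔
    (ψ u = ψ v ∧ transEdges ψ u = transEdges ψ v)
  proj : π.comp ψKR = ψ

attribute [instance] KRExp.strK KRExp.finK

/-- The data of a two-sided Karnofsky–Rhodes expansion of a finite semigroup `T`:
a finite alphabet `A`, an onto homomorphism `ψ : A⁺ → T`, and a realization `T_ψ^KR`. -/
structure KRData (T : Type) [Semigroup T] : Type 1 where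
  A : Type
  [finA : Finite A]
  ψ : FreeSemigroup A →ₙ* T
  surjψ : Function.Surjective ⇑ψ
  E : KRExp ψ

attribute [instance] KRData.finA

/-- `V` is closed under two-sided Karnofsky–Rhodes expansion. -/
def ClosedUnderKR (V : Pseudovariety) : Prop :=
  ∀ (A T : Type) [Finite A] [Semigroup T], V.Mem T →
    ∀ (ψ : FreeSemigroup A →ₙ* T), Function.Surjective ⇑ψ →
      ∀ E : KRExp ψ, V.Mem E.K

/-! ### KR-covers -/

/-- `S` is a KR-cover of the finite semigroup `T`. -/
def IsKRCoverOf (S : TopSgr) (T : Type) [Semigroup T] [Finite T] : Prop :=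
  (∃ φ : S.carrier →ₙ* T, ContinuousDisc ⇑φ ∧ Function.Surjective ⇑φ) ∧
  ∀ φ : S.carrier →ₙ* T, ContinuousDisc ⇑φ → Function.Surjective ⇑φ →
    ∃ (D : KRData T) (φψ : S.carrier →ₙ* D.E.K),
      ContinuousDisc ⇑φψ ∧ D.E.π.comp φψ = φ

/-- `S` is a KR-cover: a KR-cover of each of its finite continuous homomorphic images. -/
def IsKRCover (S : TopSgr) : Prop :=
  ∀ (T : Type) [Semigroup T] [Finite T],
    (∃ φ : S.carrier →ₙ* T, ContinuousDisc ⇑φ ∧ Function.Surjective ⇑φ) →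
    IsKRCoverOf S T

/-- `S` is `V`-projective. -/
def IsVProjective (V : Pseudovariety) (S : TopSgr) : Prop :=
  IsProV V S ∧ ∀ (T R : TopSgr), IsProV V T → IsProV V R →
    ∀ (f : S.carrier →ₙ* T.carrier) (g : R.carrier →ₙ* T.carrier),
      Continuous ⇑f → Continuous ⇑g → Function.Surjective ⇑g →
        ∃ f' : S.carrier →ₙ* R.carrier, Continuous ⇑f' ∧ g.comp f' = f

/-! ### Strong KR-covers and letter super-cancellativity -/

/-- `κ : A → S` is a generating mapping: its image generates a dense subsemigroup. -/
def GeneratingMap {A : Type} (S : TopSgr) (κ : A → S.carrier) : Prop :=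
  Dense (Subsemigroup.closure (Set.range κ) : Set S.carrier)

/-- The homomorphism `A⁺ → T` extending `a ↦ φ (κ a)`. -/
def liftGen {A : Type} (S : TopSgr) (κ : A → S.carrier) {T : Type} [Semigroup T]
    (φ : S.carrier →ₙ* T) : FreeSemigroup A →ₙ* T :=
  FreeSemigroup.lift (fun a => φ (κ a))

/-- `S` is a strong KR-cover of the finite semigroup `T` with respect to the
generating mapping `κ`. -/
def IsStrongKRCoverOfWrt {A : Type} (S : TopSgr) (κ : A → S.carrier)
    (T : Type) [Semigroup T] [Finite T] : Prop :=
  ∀ φ : S.carrier →ₙ* T, ContinuousDisc ⇑φ → Function.Surjective ⇑φ →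
    ∃ (E : KRExp (liftGen S κ φ)) (φκ : S.carrier →ₙ* E.K),
      ContinuousDisc ⇑φκ ∧ E.π.comp φκ = φ ∧
      ∀ a : A, φκ (κ a) = E.ψKR (FreeSemigroup.of a)

/-- `S` is a strong KR-cover of the finite semigroup `T` (with respect to some
generating mapping with finite domain). -/
def IsStrongKRCoverOf (S : TopSgr) (T : Type) [Semigroup T] [Finite T] : Prop :=
  ∃ A : Type, Finite A ∧ ∃ κ : A → S.carrier, GeneratingMap S κ ∧
    IsStrongKRCoverOfWrt S κ T

/-- `S` is a strong KR-cover: a strong KR-cover of each of its finite continuous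
homomorphic images. -/
def IsStrongKRCover (S : TopSgr) : Prop :=
  ∀ (T : Type) [Semigroup T] [Finite T],
    (∃ φ : S.carrier →ₙ* T, ContinuousDisc ⇑φ ∧ Function.Surjective ⇑φ) →
    IsStrongKRCoverOf S T

/-- `S` is letter super-cancellative with respect to the subset `A` of `S`. -/
def IsLSC (S : TopSgr) (A : Set S.carrier) : Prop :=
  ∀ a ∈ A, ∀ b ∈ A, ∀ u v : WithOne S.carrier,
    (u * (a : WithOne S.carrier) = v * (b : WithOne S.carrier) → a = b ∧ u = v) ∧
    ((a : WithOne S.carrier) * u = (b : WithOne S.carrier) * v → a = b ∧ u = v)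

/-! ### `S^I` and inverse limits -/

/-- The sum topology on `S^I = S ∪ {I}`: the point `I` is isolated and `S` keeps
its topology. -/
def withOneTopology (S : Type) [TopologicalSpace S] : TopologicalSpace (WithOne S) where
  IsOpen V := IsOpen ((fun s : S => (s : WithOne S)) ⁻¹' V)
  isOpen_univ := by simp
  isOpen_inter := by
    intro U V hU hV
    rw [Set.preimage_inter]
    exact hU.inter hV
  isOpen_sUnion := by
    intro s hs
    rw [Set.preimage_sUnion]
    exact isOpen_biUnion hs

/-- `S^I` as a topological semigroup (in fact a monoid): `S` with an isolated identity
adjoined. -/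
def withOneTopSgr (S : TopSgr) : TopSgr :=
  @TopSgr.mk (WithOne S.carrier) _ (withOneTopology S.carrier)

/-- The inverse limit of a family of topological semigroups, as a subsemigroup of
the product. -/
def invLimSub {I : Type} [Preorder I] (S : I → TopSgr)
    (f : ∀ i j, j ≤ i → ((S i).carrier →ₙ* (S j).carrier)) :
    Subsemigroup (∀ i, (S i).carrier) where
  carrier := {x | ∀ i j (h : j ≤ i), f i j h (x i) = x j}
  mul_mem' := by
    intro a b ha hb i j h
    simp only [Pi.mul_apply, map_mul, ha i j h, hb i j h]

/-- The inverse limit as a topological semigroup (with the topology induced from the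
product topology). -/
def invLimTopSgr {I : Type} [Preorder I] (S : I → TopSgr)
    (f : ∀ i j, j ≤ i → ((S i).carrier →ₙ* (S j).carrier)) : TopSgr :=
  TopSgr.mk (invLimSub S f)section KREquidivAux

open Relation List

namespace KREquidiv

variable {A T : Type} [Semigroup T] (ψ : FreeSemigroup A →ₙ* T)

lemma wordImg_nil : wordImg ψ ([] : List A) = 1 := rfl

lemma wordImg_append (l m : List A) :
    wordImg ψ (l ++ m) = wordImg ψ l * wordImg ψ m := by
  simp [wordImg]

lemma wordImg_cons (a : A) (r : List A) :
    wordImg ψ (a :: r) = letterImg ψ a * wordImg ψ r := by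
  simp [wordImg]

lemma wordImg_singleton (a : A) : wordImg ψ [a] = letterImg ψ a := by
  simp [wordImg]

lemma letters_mul (u v : FreeSemigroup A) :
    letters (u * v) = letters u ++ letters v := by
  simp [letters, FreeSemigroup.head_mul, FreeSemigroup.tail_mul]

lemma wordImg_letters (u : FreeSemigroup A) :
    wordImg ψ (letters u) = ((ψ u : T) : WithOne T) := by
  induction u using FreeSemigroup.recOnMul with
  | ih1 a =>
      have h : letters (FreeSemigroup.of a) = [a] := rfl
      rw [h, wordImg_singleton]
      rfl
  | ih2 x y hx hy =>
      rw [letters_mul, wordImg_append, hx, hy, map_mul, WithOne.coe_mul]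

lemma reach_fwd : ∀ (Q P R : List A),
    ReflTransGen (KRStep ψ) (wordImg ψ P, wordImg ψ (Q ++ R))
      (wordImg ψ (P ++ Q), wordImg ψ R)
  | [], P, R => by
      rw [List.nil_append, List.append_nil]
  | a :: Q, P, R => by
      refine ReflTransGen.head (b := (wordImg ψ (P ++ [a]), wordImg ψ (Q ++ R)))
        ⟨a, ?_, ?_⟩ ?_
      · show wordImg ψ P * letterImg ψ a = wordImg ψ (P ++ [a])
        rw [wordImg_append, wordImg_singleton]
      · show wordImg ψ ((a :: Q) ++ R) = letterImg ψ a * wordImg ψ (Q ++ R)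
        rw [List.cons_append, wordImg_cons]
      · have h := reach_fwd Q (P ++ [a]) R
        rwa [List.append_assoc, List.singleton_append] at h

lemma reach_exists {p q : KRVtx T} (h : ReflTransGen (KRStep ψ) p q) :
    ∃ m : List A, p.1 * wordImg ψ m = q.1 ∧ p.2 = wordImg ψ m * q.2 := by
  induction h with
  | refl => exact ⟨[], by rw [wordImg_nil, mul_one], by rw [wordImg_nil, one_mul]⟩
  | tail _ hbc ih =>
      obtain ⟨m, h1, h2⟩ := ih
      obtain ⟨a, ha1, ha2⟩ := hbc
      refine ⟨m ++ [a], ?_, ?_⟩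
      · rw [wordImg_append, wordImg_singleton, ← mul_assoc, h1, ha1]
      · rw [wordImg_append, wordImg_singleton, mul_assoc, ← ha2, ← h2]

lemma reach_bwd : ∀ (Q P R : List A),
    (∀ l a r, Q = l ++ a :: r →
      ¬ IsTransEdge ψ ((wordImg ψ (P ++ l), wordImg ψ (a :: (r ++ R))), a,
        (wordImg ψ (P ++ l ++ [a]), wordImg ψ (r ++ R)))) →
    ReflTransGen (KRStep ψ) (wordImg ψ (P ++ Q), wordImg ψ R)
      (wordImg ψ P, wordImg ψ (Q ++ R))
  | [], P, R, _ => by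
      rw [List.append_nil, List.nil_append]
  | a :: Q, P, R, hQ => by
      have hnt := hQ [] a Q rfl
      simp only [List.append_nil] at hnt
      have hedge : IsKREdge ψ ((wordImg ψ P, wordImg ψ (a :: (Q ++ R))), a,
          (wordImg ψ (P ++ [a]), wordImg ψ (Q ++ R))) := by
        constructor
        · show wordImg ψ P * letterImg ψ a = wordImg ψ (P ++ [a])
          rw [wordImg_append, wordImg_singleton]
        · show wordImg ψ (a :: (Q ++ R)) = letterImg ψ a * wordImg ψ (Q ++ R)
          rw [wordImg_cons]
      have hstep : ReflTransGen (KRStep ψ) (wordImg ψ (P ++ [a]), wordImg ψ (Q ++ R))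
          (wordImg ψ P, wordImg ψ (a :: (Q ++ R))) := by
        by_contra hc
        exact hnt ⟨hedge, hc⟩
      have ih := reach_bwd Q (P ++ [a]) R (fun l b r hr => by
        have h' := hQ (a :: l) b r (by rw [hr]; rfl)
        rwa [show P ++ a :: l = P ++ [a] ++ l by simp] at h')
      have htot := ih.trans hstep
      rw [show P ++ [a] ++ Q = P ++ a :: Q by simp] at htot
      exact htot

def ecEdge (w₁ : List A) (a : A) (w₂ : List A) : KREdge A T :=
  ((wordImg ψ w₁, wordImg ψ (a :: w₂)), a, (wordImg ψ (w₁ ++ [a]), wordImg ψ w₂))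

lemma mem_transEdges_iff {e : KREdge A T} {u : FreeSemigroup A} :
    e ∈ transEdges ψ u ↔
      (∃ w₁ w₂ a, letters u = w₁ ++ a :: w₂ ∧ e = ecEdge ψ w₁ a w₂) ∧ IsTransEdge ψ e :=
  Iff.rfl

end KREquidiv

end KREquidivAux
namespace KREquidiv

open Relation

variable {A T : Type} [Semigroup T] (ψ : FreeSemigroup A →ₙ* T)

lemma lemA (E : KRExp ψ) (k₁ k₂ k₃ k₄ : E.K) (h : k₁ * k₂ = k₃ * k₄) :
    ∃ t : WithOne T,
      ((E.π k₃ : WithOne T) = (E.π k₁ : WithOne T) * t ∧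
        t * (E.π k₄ : WithOne T) = (E.π k₂ : WithOne T)) ∨
      ((E.π k₃ : WithOne T) * t = (E.π k₁ : WithOne T) ∧
        (E.π k₄ : WithOne T) = t * (E.π k₂ : WithOne T)) := by
  classical
  obtain ⟨u₁, hu₁⟩ := E.surj k₁
  obtain ⟨u₂, hu₂⟩ := E.surj k₂
  obtain ⟨u₃, hu₃⟩ := E.surj k₃
  obtain ⟨u₄, hu₄⟩ := E.surj k₄
  have hkr : E.ψKR (u₁ * u₂) = E.ψKR (u₃ * u₄) := by
    rw [map_mul, map_mul, hu₁, hu₂, hu₃, hu₄]; exact h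
  obtain ⟨himg, htrans⟩ := (E.ker _ _).mp hkr
  have hπ : ∀ (uu : FreeSemigroup A) (k : E.K), E.ψKR uu = k →
      (E.π k : WithOne T) = wordImg ψ (letters uu) := by
    intro uu k hk
    have h0 : E.π (E.ψKR uu) = ψ uu := DFunLike.congr_fun E.proj uu
    rw [wordImg_letters, ← hk, h0]
  set L₁ := letters u₁ with hL₁
  set L₂ := letters u₂ with hL₂
  set L₃ := letters u₃ with hL₃
  set L₄ := letters u₄ with hL₄
  have hsplit_c : letters (u₁ * u₂) = L₁ ++ L₂ := letters_mul u₁ u₂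
  have hsplit_c' : letters (u₃ * u₄) = L₃ ++ L₄ := letters_mul u₃ u₄
  have hcc' : wordImg ψ (L₁ ++ L₂) = wordImg ψ (L₃ ++ L₄) := by
    rw [← hsplit_c, ← hsplit_c', wordImg_letters, wordImg_letters, himg]
  suffices hs : ReflTransGen (KRStep ψ) (wordImg ψ L₁, wordImg ψ L₂)
        (wordImg ψ L₃, wordImg ψ L₄) ∨
      ReflTransGen (KRStep ψ) (wordImg ψ L₃, wordImg ψ L₄)
        (wordImg ψ L₁, wordImg ψ L₂) by
    rcases hs with hs | hs
    · obtain ⟨m, h1, h2⟩ := reach_exists ψ hs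
      refine ⟨wordImg ψ m, Or.inl ⟨?_, ?_⟩⟩
      · rw [hπ u₃ k₃ hu₃, hπ u₁ k₁ hu₁]; exact h1.symm
      · rw [hπ u₄ k₄ hu₄, hπ u₂ k₂ hu₂]; exact h2.symm
    · obtain ⟨m, h1, h2⟩ := reach_exists ψ hs
      refine ⟨wordImg ψ m, Or.inr ⟨?_, ?_⟩⟩
      · rw [hπ u₃ k₃ hu₃, hπ u₁ k₁ hu₁]; exact h1
      · rw [hπ u₄ k₄ hu₄, hπ u₂ k₂ hu₂]; exact h2
  by_cases hA : ∃ (l : List A) (a : A) (r m : List A) (a' : A) (r' : List A),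
      L₁ = l ++ a :: r ∧ L₄ = m ++ a' :: r' ∧
      IsTransEdge ψ (ecEdge ψ l a (r ++ L₂)) ∧
      ecEdge ψ l a (r ++ L₂) = ecEdge ψ (L₃ ++ m) a' r'
  · obtain ⟨l, a, r, m, a', r', hL1, hL4, htr, heq⟩ := hA
    refine Or.inr ?_
    have r1 := reach_fwd ψ m L₃ (a' :: r')
    rw [← hL4] at r1
    have h1 : (wordImg ψ l, wordImg ψ (a :: (r ++ L₂))) =
        (wordImg ψ (L₃ ++ m), wordImg ψ (a' :: r')) := congrArg Prod.fst heq
    have r2 := reach_fwd ψ (a :: r) l L₂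
    simp only [List.cons_append] at r2
    rw [← hL1] at r2
    rw [h1] at r2
    exact r1.trans r2
  · by_cases hB : ∃ (l : List A) (a : A) (r : List A),
        L₁ = l ++ a :: r ∧ IsTransEdge ψ (ecEdge ψ l a (r ++ L₂))
    · -- take the transition edge before the cut with maximal position
      obtain ⟨l₀, a₀, r₀, hd₀, ht₀⟩ := hB
      set Pn : ℕ → Prop := fun n => ∃ (l : List A) (a : A) (r : List A),
        l.length = n ∧ L₁ = l ++ a :: r ∧ IsTransEdge ψ (ecEdge ψ l a (r ++ L₂)) with hPn
      have hbound : ∀ n, Pn n → n ≤ L₁.length := by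
        rintro n ⟨l, a, r, hn, hd, -⟩
        rw [← hn, hd, List.length_append, List.length_cons]
        omega
      have hP0 : Pn l₀.length := ⟨l₀, a₀, r₀, rfl, hd₀, ht₀⟩
      set N := Nat.findGreatest Pn L₁.length with hN
      have hPN : Pn N := Nat.findGreatest_spec (hbound _ hP0) hP0
      obtain ⟨l, a, r, hlen, hdec, htr⟩ := hPN
      have hmax : ∀ (l' : List A) (a' : A) (r'' : List A), r = l' ++ a' :: r'' →
          ¬ IsTransEdge ψ (ecEdge ψ (l ++ [a] ++ l') a' (r'' ++ L₂)) := by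
        intro l' a' r'' hr htr'
        have hP' : Pn (l ++ [a] ++ l').length :=
          ⟨l ++ [a] ++ l', a', r'', rfl, by rw [hdec, hr]; simp, htr'⟩
        have hgt : N < (l ++ [a] ++ l').length := by
          simp only [List.length_append, List.length_singleton]
          omega
        exact Nat.findGreatest_is_greatest hgt (hbound _ hP') hP'
      have hseg := reach_bwd ψ r (l ++ [a]) L₂ (fun l' a' r'' hr => by
        have h' := hmax l' a' r'' hr
        simpa [ecEdge] using h')
      have rv : ReflTransGen (KRStep ψ) (wordImg ψ L₁, wordImg ψ L₂)
          (wordImg ψ (l ++ [a]), wordImg ψ (r ++ L₂)) := by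
        rw [show (l ++ [a]) ++ r = l ++ a :: r by simp, ← hdec] at hseg
        exact hseg
      have hmem : ecEdge ψ l a (r ++ L₂) ∈ transEdges ψ (u₁ * u₂) := by
        refine (mem_transEdges_iff ψ).mpr ⟨⟨l, r ++ L₂, a, ?_, rfl⟩, htr⟩
        rw [hsplit_c, hdec]; simp
      rw [htrans] at hmem
      obtain ⟨⟨w₁', w₂', a', hsplit, he⟩, -⟩ := (mem_transEdges_iff ψ).mp hmem
      have hsplit' : L₃ ++ L₄ = w₁' ++ a' :: w₂' := by rw [← hsplit_c', hsplit]
      rcases List.append_eq_append_iff.mp hsplit' with ⟨k, hk1, hk2⟩ | ⟨k, hk1, hk2⟩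
      · exact absurd ⟨l, a, r, k, a', w₂', hdec, hk2, htr, by rw [he, hk1]⟩ hA
      · cases k with
        | nil =>
            simp only [List.append_nil] at hk1
            exact absurd ⟨l, a, r, [], a', w₂', hdec,
              by simp only [List.nil_append] at hk2 ⊢; exact hk2.symm, htr,
              by rw [he, List.append_nil, hk1]⟩ hA
        | cons b k' =>
            have hk2' : a' = b ∧ w₂' = k' ++ L₄ := by
              have h'' := hk2
              simp only [List.cons_append, List.cons.injEq] at h''
              exact h''
            obtain ⟨rfl, hw2⟩ := hk2'
            have h22 : (wordImg ψ (l ++ [a]), wordImg ψ (r ++ L₂)) =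
                (wordImg ψ (w₁' ++ [a']), wordImg ψ w₂') := by
              have h3 := congrArg (fun e : KREdge A T => e.2.2) he
              simpa [ecEdge] using h3
            have rfwd := reach_fwd ψ k' (w₁' ++ [a']) L₄
            rw [show (w₁' ++ [a']) ++ k' = L₃ by rw [hk1]; simp, ← hw2, ← h22] at rfwd
            exact Or.inl (rv.trans rfwd)
    · refine Or.inl ?_
      have r1 := reach_bwd ψ L₁ [] L₂ (fun l a r hr htr' =>
        hB ⟨l, a, r, hr, by simpa [ecEdge] using htr'⟩)
      simp only [List.nil_append] at r1
      have r2 := reach_fwd ψ L₃ [] L₄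
      simp only [List.nil_append] at r2
      rw [← hcc'] at r2
      exact r1.trans r2

end KREquidiv
namespace KREquidiv

section Numakura

variable {X : Type} [Semigroup X] [TopologicalSpace X]

/-- The syntactic congruence of a subset `U` of a semigroup. -/
def synCon (U : Set X) : Con X where
  r a b := (a ∈ U ↔ b ∈ U) ∧ (∀ z, z * a ∈ U ↔ z * b ∈ U) ∧
    (∀ z, a * z ∈ U ↔ b * z ∈ U) ∧
    (∀ p : X × X, p.1 * a * p.2 ∈ U ↔ p.1 * b * p.2 ∈ U)
  iseqv := ⟨fun _ => ⟨Iff.rfl, fun _ => Iff.rfl, fun _ => Iff.rfl, fun _ => Iff.rfl⟩,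
    fun h => ⟨h.1.symm, fun z => (h.2.1 z).symm, fun z => (h.2.2.1 z).symm,
      fun p => (h.2.2.2 p).symm⟩,
    fun h h' => ⟨h.1.trans h'.1, fun z => (h.2.1 z).trans (h'.2.1 z),
      fun z => (h.2.2.1 z).trans (h'.2.2.1 z),
      fun p => (h.2.2.2 p).trans (h'.2.2.2 p)⟩⟩
  mul' := by
    rintro a b a' b' ⟨h1, h2, h3, h4⟩ ⟨h1', h2', h3', h4'⟩
    refine ⟨(h3 a').trans (h2' b), ?_, ?_, ?_⟩
    · intro z
      rw [← mul_assoc, ← mul_assoc]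
      exact (h4 (z, a')).trans (h2' (z * b))
    · intro z
      rw [mul_assoc, mul_assoc]
      exact (h3 (a' * z)).trans (by
        rw [← mul_assoc, ← mul_assoc]
        exact h4' (b, z))
    · rintro ⟨z, w⟩
      show z * (a * a') * w ∈ U ↔ z * (b * b') * w ∈ U
      rw [show z * (a * a') * w = z * a * (a' * w) by
          rw [← mul_assoc, mul_assoc (z * a)],
        show z * (b * b') * w = z * b * (b' * w) by
          rw [← mul_assoc, mul_assoc (z * b)]]
      exact (h4 (z, a' * w)).trans (by
        rw [← mul_assoc, ← mul_assoc]
        exact h4' (z * b, w))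

omit [TopologicalSpace X] in
lemma synCon_apply (U : Set X) (a b : X) : synCon U a b ↔
    ((a ∈ U ↔ b ∈ U) ∧ (∀ z, z * a ∈ U ↔ z * b ∈ U) ∧
      (∀ z, a * z ∈ U ↔ b * z ∈ U) ∧
      (∀ p : X × X, p.1 * a * p.2 ∈ U ↔ p.1 * b * p.2 ∈ U)) :=
  Iff.rfl

/-- Local constancy of slices of a clopen subset of a product with compact first factor. -/
lemma locConst {Z Y : Type} [TopologicalSpace Z] [TopologicalSpace Y] [CompactSpace Z]
    (W : Set (Z × Y)) (hW : IsClopen W) (y₀ : Y) :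
    IsOpen {y : Y | ∀ z : Z, ((z, y) ∈ W ↔ (z, y₀) ∈ W)} := by
  rw [isOpen_iff_forall_mem_open]
  intro y₁ hy₁
  have hbox : ∀ z : Z, ∃ (Az : Set Z) (Bz : Set Y), IsOpen Az ∧ IsOpen Bz ∧
      z ∈ Az ∧ y₁ ∈ Bz ∧ (Az ×ˢ Bz ⊆ W ∨ Az ×ˢ Bz ⊆ Wᶜ) := by
    intro z
    by_cases hz : (z, y₁) ∈ W
    · obtain ⟨Az, Bz, hOA, hOB, hzA, hyB, hsub⟩ := isOpen_prod_iff.mp hW.isOpen z y₁ hz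
      exact ⟨Az, Bz, hOA, hOB, hzA, hyB, Or.inl hsub⟩
    · obtain ⟨Az, Bz, hOA, hOB, hzA, hyB, hsub⟩ :=
        isOpen_prod_iff.mp hW.isClosed.isOpen_compl z y₁ hz
      exact ⟨Az, Bz, hOA, hOB, hzA, hyB, Or.inr hsub⟩
  choose Az Bz hOA hOB hzA hyB hsub using hbox
  obtain ⟨F, hF⟩ := isCompact_univ.elim_finite_subcover Az hOA
    (fun z _ => Set.mem_iUnion.mpr ⟨z, hzA z⟩)
  refine ⟨⋂ z ∈ F, Bz z, ?_, isOpen_biInter_finset (fun z _ => hOB z), ?_⟩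
  · intro y hy z
    obtain ⟨i, hiF, hzi⟩ := Set.mem_iUnion₂.mp (hF (Set.mem_univ z))
    have hyBi : y ∈ Bz i := Set.mem_iInter₂.mp hy i hiF
    rcases hsub i with hs | hs
    · exact iff_of_true (hs ⟨hzi, hyBi⟩) ((hy₁ z).mp (hs ⟨hzi, hyB i⟩))
    · exact iff_of_false (hs ⟨hzi, hyBi⟩)
        (fun hh => (hs ⟨hzi, hyB i⟩) ((hy₁ z).mpr hh))
  · exact Set.mem_iInter₂.mpr (fun z _ => hyB z)

variable [CompactSpace X] [ContinuousMul X]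

lemma synCon_classes_open (U : Set X) (hU : IsClopen U) (s : X) :
    IsOpen {s' | synCon U s s'} := by
  have h1 : IsOpen {s' : X | s' ∈ U ↔ s ∈ U} := by
    by_cases hs : s ∈ U
    · have he : {s' : X | s' ∈ U ↔ s ∈ U} = U := by ext s'; simp [hs]
      rw [he]; exact hU.isOpen
    · have he : {s' : X | s' ∈ U ↔ s ∈ U} = Uᶜ := by ext s'; simp [hs]
      rw [he]; exact hU.isClosed.isOpen_compl
  have h2 : IsOpen {s' : X | ∀ z : X,
      ((z, s') ∈ {p : X × X | p.1 * p.2 ∈ U} ↔ (z, s) ∈ {p : X × X | p.1 * p.2 ∈ U})} :=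
    locConst _ (hU.preimage continuous_mul) s
  have h3 : IsOpen {s' : X | ∀ z : X,
      ((z, s') ∈ {p : X × X | p.2 * p.1 ∈ U} ↔ (z, s) ∈ {p : X × X | p.2 * p.1 ∈ U})} :=
    locConst _ (hU.preimage (continuous_snd.mul continuous_fst)) s
  have h4 : IsOpen {s' : X | ∀ z : X × X,
      ((z, s') ∈ {p : (X × X) × X | p.1.1 * p.2 * p.1.2 ∈ U} ↔
        (z, s) ∈ {p : (X × X) × X | p.1.1 * p.2 * p.1.2 ∈ U})} :=
    locConst _ (hU.preimage ((continuous_fst.fst.mul continuous_snd).mul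
      continuous_fst.snd)) s
  have heq : {s' | synCon U s s'} =
      {s' : X | s' ∈ U ↔ s ∈ U} ∩ ({s' : X | ∀ z, (z * s' ∈ U ↔ z * s ∈ U)} ∩
        ({s' : X | ∀ z, (s' * z ∈ U ↔ s * z ∈ U)} ∩
          {s' : X | ∀ z : X × X, (z.1 * s' * z.2 ∈ U ↔ z.1 * s * z.2 ∈ U)})) := by
    ext s'
    simp only [Set.mem_setOf_eq, Set.mem_inter_iff]
    rw [synCon_apply]
    constructor
    · rintro ⟨a1, a2, a3, a4⟩
      exact ⟨a1.symm, fun z => (a2 z).symm, fun z => (a3 z).symm, fun p => (a4 p).symm⟩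
    · rintro ⟨a1, a2, a3, a4⟩
      exact ⟨a1.symm, fun z => (a2 z).symm, fun z => (a3 z).symm, fun p => (a4 p).symm⟩
  rw [heq]
  exact h1.inter (h2.inter (h3.inter h4))

lemma synCon_finite (U : Set X) (hU : IsClopen U) :
    Finite (synCon U).Quotient := by
  obtain ⟨F, hF⟩ := isCompact_univ.elim_finite_subcover
    (fun s : X => {s' | synCon U s s'}) (synCon_classes_open U hU)
    (fun s _ => Set.mem_iUnion.mpr ⟨s, (synCon U).refl s⟩)
  have hsurj : Function.Surjective
      (fun s : {a : X // a ∈ F} => ((s : X) : (synCon U).Quotient)) := by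
    intro q
    refine Con.induction_on q (fun s => ?_)
    obtain ⟨i, hiF, his⟩ := Set.mem_iUnion₂.mp (hF (Set.mem_univ s))
    exact ⟨⟨i, hiF⟩, (Con.eq _).mpr his⟩
  exact Finite.of_surjective _ hsurj

end Numakura

end KREquidiv
namespace KREquidiv

/-- Branch-1 witness condition at the level of a congruence quotient. -/
def eqdivA {X : Type} [Mul X] (u v x y : X) (c : Con X) (t : WithOne X) : Prop :=
  (∃ s : X, t = ↑s ∧ c x (u * s) ∧ c (s * y) v) ∨ (t = 1 ∧ c x u ∧ c y v)

/-- Branch-2 witness condition at the level of a congruence quotient. -/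
def eqdivB {X : Type} [Mul X] (u v x y : X) (c : Con X) (t : WithOne X) : Prop :=
  (∃ s : X, t = ↑s ∧ c (x * s) u ∧ c y (s * v)) ∨ (t = 1 ∧ c x u ∧ c y v)

/-- The set of approximate equidivisibility witnesses modulo a congruence. -/
def Wset {X : Type} [Mul X] (u v x y : X) (c : Con X) : Set (WithOne X) :=
  {t | eqdivA u v x y c t ∨ eqdivB u v x y c t}

lemma eqdivA_mono {X : Type} [Mul X] {u v x y : X} {c c' : Con X} (hle : c ≤ c')
    {t : WithOne X} (h : eqdivA u v x y c t) : eqdivA u v x y c' t := by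
  rcases h with ⟨s, hts, h1, h2⟩ | ⟨h1, h2, h3⟩
  exacts [Or.inl ⟨s, hts, hle h1, hle h2⟩, Or.inr ⟨h1, hle h2, hle h3⟩]

lemma eqdivB_mono {X : Type} [Mul X] {u v x y : X} {c c' : Con X} (hle : c ≤ c')
    {t : WithOne X} (h : eqdivB u v x y c t) : eqdivB u v x y c' t := by
  rcases h with ⟨s, hts, h1, h2⟩ | ⟨h1, h2, h3⟩
  exacts [Or.inl ⟨s, hts, hle h1, hle h2⟩, Or.inr ⟨h1, hle h2, hle h3⟩]

lemma withOne_cases {X : Type} [Mul X] (t : WithOne X) : t = 1 ∨ ∃ a : X, t = ↑a :=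
  WithOne.recOneCoe (Or.inl rfl) (fun a => Or.inr ⟨a, rfl⟩) t

end KREquidiv

open KREquidiv in
/-- Profinite KR-covers are equidivisible. -/
theorem KRCover_equidivisible (S : TopSgr) (hpro : IsProfiniteSgr S)
    (hKR : IsKRCover S) :
    Equidivisible S.carrier := by
  classical
  obtain ⟨hcomp, ht2, htd, hmul⟩ := hpro
  haveI := hcomp; haveI := ht2; haveI := htd; haveI := hmul
  haveI : TotallySeparatedSpace S.carrier := loc_compact_t2_tot_disc_iff_tot_sep.mp htd
  intro u v x y huv
  -- the family of "good" congruences: finite index with open classes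
  have hsep : ∀ a b : S.carrier,
      (∀ c : Con S.carrier, (Finite c.Quotient ∧ ∀ s : S.carrier, IsOpen {s' | c s s'}) →
        c a b) → a = b := by
    intro a b hab
    by_contra hne
    obtain ⟨U, hU, haU, hbU⟩ := exists_isClopen_of_totally_separated hne
    have hg := hab (synCon U) ⟨synCon_finite U hU, synCon_classes_open U hU⟩
    exact hbU (hg.1.mp haU)
  -- topology on `S^I`
  letI : TopologicalSpace (WithOne S.carrier) := withOneTopology S.carrier
  have hcont_coe : Continuous (fun s : S.carrier => (s : WithOne S.carrier)) :=
    ⟨fun V hV => hV⟩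
  haveI : CompactSpace (WithOne S.carrier) := by
    constructor
    have huniv : (Set.univ : Set (WithOne S.carrier)) =
        insert (1 : WithOne S.carrier)
          (Set.range (fun s : S.carrier => (s : WithOne S.carrier))) := by
      ext z
      simp only [Set.mem_univ, true_iff, Set.mem_insert_iff, Set.mem_range]
      rcases withOne_cases z with h | ⟨a, h⟩
      · exact Or.inl h
      · exact Or.inr ⟨a, h.symm⟩
    rw [huniv]
    exact (isCompact_range hcont_coe).insert 1
  have hclosed_of : ∀ C : Set (WithOne S.carrier),
      IsClosed ((fun s : S.carrier => (s : WithOne S.carrier)) ⁻¹' C) → IsClosed C := by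
    intro C hC
    rw [← isOpen_compl_iff] at hC ⊢
    exact hC
  -- classes of good congruences are closed
  have hclass_closed : ∀ (c : Con S.carrier), (∀ s : S.carrier, IsOpen {s' | c s s'}) →
      ∀ s₀ : S.carrier, IsClosed {s' | c s₀ s'} := by
    intro c hc s₀
    rw [← isOpen_compl_iff, isOpen_iff_forall_mem_open]
    intro z hz
    exact ⟨{s' | c z s'}, fun w hw hcontra => hz (c.trans hcontra (c.symm hw)),
      hc z, c.refl z⟩
  -- the witness sets are closed
  have hWclosed : ∀ c : Con S.carrier, (∀ s : S.carrier, IsOpen {s' | c s s'}) →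
      IsClosed (Wset u v x y c) := by
    intro c hc
    apply hclosed_of
    have hpre : (fun s : S.carrier => (s : WithOne S.carrier)) ⁻¹' Wset u v x y c =
        ({s : S.carrier | c x (u * s)} ∩ {s | c (s * y) v}) ∪
          ({s | c (x * s) u} ∩ {s | c y (s * v)}) := by
      ext s
      simp only [Set.mem_preimage, Wset, eqdivA, eqdivB, Set.mem_setOf_eq,
        Set.mem_union, Set.mem_inter_iff]
      constructor
      · rintro ((⟨s', hs', h1, h2⟩ | ⟨h1, -⟩) | (⟨s', hs', h1, h2⟩ | ⟨h1, -⟩))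
        · rw [WithOne.coe_inj] at hs'; subst hs'; exact Or.inl ⟨h1, h2⟩
        · exact absurd h1 WithOne.coe_ne_one
        · rw [WithOne.coe_inj] at hs'; subst hs'; exact Or.inr ⟨h1, h2⟩
        · exact absurd h1 WithOne.coe_ne_one
      · rintro (⟨h1, h2⟩ | ⟨h1, h2⟩)
        · exact Or.inl (Or.inl ⟨s, rfl, h1, h2⟩)
        · exact Or.inr (Or.inl ⟨s, rfl, h1, h2⟩)
    rw [hpre]
    have hA1 : IsClosed {s : S.carrier | c x (u * s)} :=
      (hclass_closed c hc x).preimage (continuous_const.mul continuous_id)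
    have hA2 : IsClosed {s : S.carrier | c (s * y) v} := by
      have he : {s : S.carrier | c (s * y) v} =
          (fun s : S.carrier => s * y) ⁻¹' {s' | c v s'} := by
        ext s; exact ⟨fun h => c.symm h, fun h => c.symm h⟩
      rw [he]
      exact (hclass_closed c hc v).preimage (continuous_id.mul continuous_const)
    have hA3 : IsClosed {s : S.carrier | c (x * s) u} := by
      have he : {s : S.carrier | c (x * s) u} =
          (fun s : S.carrier => x * s) ⁻¹' {s' | c u s'} := by
        ext s; exact ⟨fun h => c.symm h, fun h => c.symm h⟩
      rw [he]
      exact (hclass_closed c hc u).preimage (continuous_const.mul continuous_id)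
    have hA4 : IsClosed {s : S.carrier | c y (s * v)} :=
      (hclass_closed c hc y).preimage (continuous_id.mul continuous_const)
    exact (hA1.inter hA2).union (hA3.inter hA4)
  -- the witness sets are nonempty, via the KR-cover property
  have hWne : ∀ c : Con S.carrier, Finite c.Quotient →
      (∀ s : S.carrier, IsOpen {s' | c s s'}) → (Wset u v x y c).Nonempty := by
    intro c hfin hc
    haveI := hfin
    let mkc : S.carrier →ₙ* c.Quotient := ⟨fun s => (s : c.Quotient), fun a b => Con.coe_mul a b⟩
    have hmkc_cont : ContinuousDisc ⇑mkc := by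
      have hopenpre : ∀ V : Set c.Quotient, IsOpen ((⇑mkc) ⁻¹' V) := by
        intro V
        have hpre : (⇑mkc) ⁻¹' V =
            ⋃ s₀ : {s₀ : S.carrier // (s₀ : c.Quotient) ∈ V}, {s' | c ↑s₀ s'} := by
          ext s
          simp only [Set.mem_preimage, Set.mem_iUnion, Set.mem_setOf_eq]
          constructor
          · intro hs; exact ⟨⟨s, hs⟩, c.refl s⟩
          · rintro ⟨⟨s₀, hs₀⟩, hrel⟩
            have he : (s₀ : c.Quotient) = (s : c.Quotient) := (Con.eq c).mpr hrel
            rw [he] at hs₀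
            exact hs₀
        rw [hpre]
        exact isOpen_iUnion (fun s₀ => hc _)
      exact @Continuous.mk _ _ _ ⊥ _ (fun V _ => hopenpre V)
    have hmkc_surj : Function.Surjective ⇑mkc :=
      fun q => Con.induction_on q (fun s => ⟨s, rfl⟩)
    obtain ⟨D, φψ, hφcont, hφeq⟩ :=
      (hKR c.Quotient ⟨mkc, hmkc_cont, hmkc_surj⟩).2 mkc hmkc_cont hmkc_surj
    have hπφ : ∀ s : S.carrier, D.E.π (φψ s) = mkc s :=
      fun s => DFunLike.congr_fun hφeq s
    have hmuleq : φψ u * φψ v = φψ x * φψ y := by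
      rw [← map_mul, ← map_mul, huv]
    obtain ⟨t, ht⟩ := lemA D.ψ D.E (φψ u) (φψ v) (φψ x) (φψ y) hmuleq
    rw [hπφ u, hπφ v, hπφ x, hπφ y] at ht
    rcases withOne_cases t with rfl | ⟨q, rfl⟩
    · -- the witness is trivial
      have hcxu : c x u ∧ c y v := by
        rcases ht with ⟨h1, h2⟩ | ⟨h1, h2⟩
        · rw [mul_one] at h1
          rw [one_mul] at h2
          exact ⟨c.eq.mp (WithOne.coe_inj.mp h1), c.eq.mp (WithOne.coe_inj.mp h2)⟩
        · rw [mul_one] at h1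
          rw [one_mul] at h2
          exact ⟨c.eq.mp (WithOne.coe_inj.mp h1), c.eq.mp (WithOne.coe_inj.mp h2)⟩
      exact ⟨(1 : WithOne S.carrier), Or.inl (Or.inr ⟨rfl, hcxu.1, hcxu.2⟩)⟩
    · obtain ⟨s, rfl⟩ := hmkc_surj q
      rcases ht with ⟨h1, h2⟩ | ⟨h1, h2⟩
      · refine ⟨(s : WithOne S.carrier), Or.inl (Or.inl ⟨s, rfl, ?_, ?_⟩)⟩
        · rw [← WithOne.coe_mul] at h1
          have h1' := WithOne.coe_inj.mp h1
          rw [← map_mul] at h1'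
          exact c.eq.mp h1'
        · rw [← WithOne.coe_mul] at h2
          have h2' := WithOne.coe_inj.mp h2
          rw [← map_mul] at h2'
          exact c.eq.mp h2'
      · refine ⟨(s : WithOne S.carrier), Or.inr (Or.inl ⟨s, rfl, ?_, ?_⟩)⟩
        · rw [← WithOne.coe_mul] at h1
          have h1' := WithOne.coe_inj.mp h1
          rw [← map_mul] at h1'
          exact c.eq.mp h1'
        · rw [← WithOne.coe_mul] at h2
          have h2' := WithOne.coe_inj.mp h2
          rw [← map_mul] at h2'
          exact c.eq.mp h2'
  -- good congruences are closed under binary infima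
  have hGoodInf : ∀ c₁ c₂ : Con S.carrier,
      (Finite c₁.Quotient ∧ ∀ s : S.carrier, IsOpen {s' | c₁ s s'}) →
      (Finite c₂.Quotient ∧ ∀ s : S.carrier, IsOpen {s' | c₂ s s'}) →
      (Finite (c₁ ⊓ c₂).Quotient ∧ ∀ s : S.carrier, IsOpen {s' | (c₁ ⊓ c₂) s s'}) := by
    intro c₁ c₂ h₁ h₂
    constructor
    · haveI := h₁.1; haveI := h₂.1
      have hinj : Function.Injective (fun q : (c₁ ⊓ c₂).Quotient =>
          Con.liftOn q (fun s => ((s : c₁.Quotient), (s : c₂.Quotient)))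
            (fun a b hab => by
              obtain ⟨hab1, hab2⟩ := Con.inf_iff_and.mp hab
              exact Prod.ext ((Con.eq _).mpr hab1) ((Con.eq _).mpr hab2))) := by
        intro q r
        refine Con.induction_on₂ q r (fun a b h => ?_)
        have h' : ((a : c₁.Quotient), (a : c₂.Quotient)) =
            ((b : c₁.Quotient), (b : c₂.Quotient)) := h
        exact (Con.eq _).mpr (Con.inf_iff_and.mpr
          ⟨(Con.eq _).mp (congrArg Prod.fst h'), (Con.eq _).mp (congrArg Prod.snd h')⟩)
      exact Finite.of_injective _ hinj
    · intro s
      have he : {s' | (c₁ ⊓ c₂) s s'} = {s' | c₁ s s'} ∩ {s' | c₂ s s'} := by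
        ext s'; exact Con.inf_iff_and
      rw [he]
      exact (h₁.2 s).inter (h₂.2 s)
  -- intersect the witness sets by compactness
  let ι := {c : Con S.carrier //
    Finite c.Quotient ∧ ∀ s : S.carrier, IsOpen {s' | c s s'}}
  haveI : Nonempty ι :=
    ⟨⟨synCon (∅ : Set S.carrier),
      synCon_finite ∅ isClopen_empty, synCon_classes_open ∅ isClopen_empty⟩⟩
  have hmono : ∀ (c c' : Con S.carrier), c ≤ c' →
      Wset u v x y c ⊆ Wset u v x y c' := by
    intro c c' hle t ht
    rcases ht with h | h
    exacts [Or.inl (eqdivA_mono hle h), Or.inr (eqdivB_mono hle h)]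
  have hWdir : Directed (· ⊇ ·) (fun ci : ι => Wset u v x y ci.1) := by
    intro c₁ c₂
    exact ⟨⟨c₁.1 ⊓ c₂.1, hGoodInf _ _ c₁.2 c₂.2⟩,
      hmono _ _ inf_le_left, hmono _ _ inf_le_right⟩
  obtain ⟨t, ht⟩ := IsCompact.nonempty_iInter_of_directed_nonempty_isCompact_isClosed
    (fun ci : ι => Wset u v x y ci.1) hWdir
    (fun ci => hWne ci.1 ci.2.1 ci.2.2)
    (fun ci => (hWclosed ci.1 ci.2.2).isCompact)
    (fun ci => hWclosed ci.1 ci.2.2)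
  have htmem : ∀ ci : ι, t ∈ Wset u v x y ci.1 := fun ci => Set.mem_iInter.mp ht ci
  -- dichotomy between the two branches
  have hdich : (∀ ci : ι, eqdivA u v x y ci.1 t) ∨ (∀ ci : ι, eqdivB u v x y ci.1 t) := by
    by_contra hcon
    push_neg at hcon
    obtain ⟨⟨c₁, hc₁⟩, ⟨c₂, hc₂⟩⟩ := hcon
    rcases htmem ⟨c₁.1 ⊓ c₂.1, hGoodInf _ _ c₁.2 c₂.2⟩ with h | h
    · exact hc₁ (eqdivA_mono inf_le_left h)
    · exact hc₂ (eqdivB_mono inf_le_right h)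
  rcases hdich with hall | hall
  · rcases withOne_cases t with h1 | ⟨s, hs⟩
    · have hxu : x = u := by
        refine hsep x u (fun c hc => ?_)
        rcases hall ⟨c, hc⟩ with ⟨s, hts, -, -⟩ | ⟨-, h2, -⟩
        · rw [h1] at hts; exact absurd hts.symm WithOne.coe_ne_one
        · exact h2
      have hyv : y = v := by
        refine hsep y v (fun c hc => ?_)
        rcases hall ⟨c, hc⟩ with ⟨s, hts, -, -⟩ | ⟨-, -, h3⟩
        · rw [h1] at hts; exact absurd hts.symm WithOne.coe_ne_one
        · exact h3
      refine ⟨1, Or.inl ⟨?_, ?_⟩⟩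
      · rw [mul_one, hxu]
      · rw [one_mul, hyv]
    · have hxus : x = u * s := by
        refine hsep x (u * s) (fun c hc => ?_)
        rcases hall ⟨c, hc⟩ with ⟨s', hts, hh1, -⟩ | ⟨ht1, -, -⟩
        · rw [hs] at hts
          obtain rfl := WithOne.coe_inj.mp hts.symm
          exact hh1
        · rw [hs] at ht1; exact absurd ht1 WithOne.coe_ne_one
      have hsyv : s * y = v := by
        refine hsep (s * y) v (fun c hc => ?_)
        rcases hall ⟨c, hc⟩ with ⟨s', hts, -, hh2⟩ | ⟨ht1, -, -⟩
        · rw [hs] at hts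
          obtain rfl := WithOne.coe_inj.mp hts.symm
          exact hh2
        · rw [hs] at ht1; exact absurd ht1 WithOne.coe_ne_one
      refine ⟨(s : WithOne S.carrier), Or.inl ⟨?_, ?_⟩⟩
      · rw [← WithOne.coe_mul]; exact WithOne.coe_inj.mpr hxus
      · rw [← WithOne.coe_mul]; exact WithOne.coe_inj.mpr hsyv
  · rcases withOne_cases t with h1 | ⟨s, hs⟩
    · have hxu : x = u := by
        refine hsep x u (fun c hc => ?_)
        rcases hall ⟨c, hc⟩ with ⟨s, hts, -, -⟩ | ⟨-, h2, -⟩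
        · rw [h1] at hts; exact absurd hts.symm WithOne.coe_ne_one
        · exact h2
      have hyv : y = v := by
        refine hsep y v (fun c hc => ?_)
        rcases hall ⟨c, hc⟩ with ⟨s, hts, -, -⟩ | ⟨-, -, h3⟩
        · rw [h1] at hts; exact absurd hts.symm WithOne.coe_ne_one
        · exact h3
      refine ⟨1, Or.inr ⟨?_, ?_⟩⟩
      · rw [mul_one, hxu]
      · rw [one_mul, hyv]
    · have hxsu : x * s = u := by
        refine hsep (x * s) u (fun c hc => ?_)
        rcases hall ⟨c, hc⟩ with ⟨s', hts, hh1, -⟩ | ⟨ht1, -, -⟩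
        · rw [hs] at hts
          obtain rfl := WithOne.coe_inj.mp hts.symm
          exact hh1
        · rw [hs] at ht1; exact absurd ht1 WithOne.coe_ne_one
      have hysv : y = s * v := by
        refine hsep y (s * v) (fun c hc => ?_)
        rcases hall ⟨c, hc⟩ with ⟨s', hts, -, hh2⟩ | ⟨ht1, -, -⟩
        · rw [hs] at hts
          obtain rfl := WithOne.coe_inj.mp hts.symm
          exact hh2
        · rw [hs] at ht1; exact absurd ht1 WithOne.coe_ne_one
      refine ⟨(s : WithOne S.carrier), Or.inr ⟨?_, ?_⟩⟩
      · rw [← WithOne.coe_mul]; exact WithOne.coe_inj.mpr hxsu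
      · rw [← WithOne.coe_mul]; exact WithOne.coe_inj.mpr hysv
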